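/- Let $L$ be an $N \times N$ complex matrix with eigenvalues $\lambda_1, \dots, \lambda_N$ satisfying $|\lambda_j - \lambda_k| \geq \delta > 0$ for all $j \neq k$, with corresponding unit eigenvectors $\xi_1, \dots, \xi_N$ forming the columns of a matrix $U$ (so that $U^{-1} L U = \operatorname{diag}(\lambda_1, \dots, \lambda_N)$). Then $\|U^{-1}\| \leq \sqrt{N}\,(2\delta^{-1}\|L\|)^{N-1}$, where $\|\cdot\|$ is the operator norm. -/

import Mathlib

set_option maxHeartbeats 1000000
set_option synthInstance.maxHeartbeats 400000

noncomputable def opNorm {N : ℕ} (M : Matrix (Fin N) (Fin N) ℂ) : ℝ :=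
  ‖Matrix.toEuclideanCLM (𝕜 := ℂ) M‖

theorem stmt11 {N : ℕ} (hN : 1 ≤ N) (L : Matrix (Fin N) (Fin N) ℂ)
    (lam : Fin N → ℂ) (ξ : Fin N → (Fin N → ℂ)) (δ : ℝ) (hδ : 0 < δ)
    (hsep : ∀ j k, j ≠ k → δ ≤ ‖lam j - lam k‖)
    (heig : ∀ j, L.mulVec (ξ j) = lam j • ξ j)
    (hunit : ∀ j, ‖(WithLp.equiv 2 (Fin N → ℂ)).symm (ξ j)‖ = 1)
    (U : Matrix (Fin N) (Fin N) ℂ) (hU : U = Matrix.of fun i j => ξ j i) :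
    opNorm U⁻¹ ≤ Real.sqrt N * (2 * δ⁻¹ * opNorm L) ^ (N - 1) := by
  classical
  set T := Matrix.toEuclideanCLM (𝕜 := ℂ) L with hTdef
  have hTnorm : opNorm L = ‖T‖ := rfl
  have hK0 : (0:ℝ) ≤ 2 * δ⁻¹ * opNorm L := by
    rw [hTnorm]; positivity
  have hRHS0 : (0:ℝ) ≤ Real.sqrt N * (2 * δ⁻¹ * opNorm L) ^ (N - 1) :=
    mul_nonneg (Real.sqrt_nonneg _) (pow_nonneg hK0 _)
  by_cases hdet : IsUnit U.det
  swap
  · rw [Matrix.nonsing_inv_apply_not_isUnit U hdet]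
    have h0 : opNorm (0 : Matrix (Fin N) (Fin N) ℂ) = 0 := by
      show ‖Matrix.toEuclideanCLM (𝕜 := ℂ) (0 : Matrix (Fin N) (Fin N) ℂ)‖ = 0
      rw [map_zero, norm_zero]
    rw [h0]; exact hRHS0
  -- eigenvectors in Euclidean space
  set v : Fin N → EuclideanSpace ℂ (Fin N) :=
    fun j => (WithLp.equiv 2 (Fin N → ℂ)).symm (ξ j) with hvdef
  have hv : ∀ j, T (v j) = lam j • v j := by
    intro j
    rw [hvdef]
    simp only [hTdef, WithLp.equiv_symm_apply, Matrix.toEuclideanCLM_toLp, Matrix.toLin'_apply, heig j]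
    rfl
  have hvnorm : ∀ j, ‖v j‖ = 1 := hunit
  -- eigenvalue bound
  have hlam : ∀ l, ‖lam l‖ ≤ ‖T‖ := by
    intro l
    have h1 : ‖T (v l)‖ ≤ ‖T‖ * ‖v l‖ := T.le_opNorm _
    rw [hv l, norm_smul, hvnorm l, mul_one, mul_one] at h1
    exact h1
  set K := 2 * δ⁻¹ * ‖T‖ with hKdef
  have hK0' : (0:ℝ) ≤ K := by positivity
  -- factor polynomials
  set q : Fin N → Fin N → Polynomial ℂ :=
    fun j l => Polynomial.C ((lam j - lam l)⁻¹) * (Polynomial.X - Polynomial.C (lam l)) with hqdef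
  have haq : ∀ j l, (Polynomial.aeval T) (q j l)
      = ((lam j - lam l)⁻¹ • (1 : EuclideanSpace ℂ (Fin N) →L[ℂ] EuclideanSpace ℂ (Fin N)))
        * (T - lam l • 1) := by
    intro j l
    simp [hqdef, Algebra.algebraMap_eq_smul_one]
  have hns : ∀ (c : ℂ) (A : EuclideanSpace ℂ (Fin N) →L[ℂ] EuclideanSpace ℂ (Fin N)),
      ‖c • A‖ = ‖c‖ * ‖A‖ := fun c A => by exact norm_smul c A
  have hone : ‖(1 : EuclideanSpace ℂ (Fin N) →L[ℂ] EuclideanSpace ℂ (Fin N))‖ ≤ 1 := by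
    rw [ContinuousLinearMap.one_def]; exact ContinuousLinearMap.norm_id_le
  have hfn : ∀ j l, l ≠ j → ‖(Polynomial.aeval T) (q j l)‖ ≤ K := by
    intro j l hlj
    rw [haq]
    have h1 : ‖(lam j - lam l)⁻¹ • (1 : EuclideanSpace ℂ (Fin N) →L[ℂ] EuclideanSpace ℂ (Fin N))‖
        ≤ δ⁻¹ := by
      rw [hns]
      have h2 : ‖(lam j - lam l)⁻¹‖ ≤ δ⁻¹ := by
        rw [norm_inv]
        exact inv_anti₀ hδ (hsep j l hlj.symm)
      calc ‖(lam j - lam l)⁻¹‖ * ‖(1 : EuclideanSpace ℂ (Fin N) →L[ℂ] EuclideanSpace ℂ (Fin N))‖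
          ≤ δ⁻¹ * 1 := mul_le_mul h2 hone (norm_nonneg _) (by positivity)
        _ = δ⁻¹ := mul_one _
    have h3 : ‖T - lam l • 1‖ ≤ 2 * ‖T‖ := by
      calc ‖T - lam l • 1‖ ≤ ‖T‖ + ‖lam l • (1 : EuclideanSpace ℂ (Fin N) →L[ℂ] EuclideanSpace ℂ (Fin N))‖ := norm_sub_le _ _
        _ ≤ ‖T‖ + ‖T‖ := by
            refine add_le_add (le_refl _) ?_
            rw [hns]
            calc ‖lam l‖ * ‖(1 : EuclideanSpace ℂ (Fin N) →L[ℂ] EuclideanSpace ℂ (Fin N))‖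
                ≤ ‖T‖ * 1 := mul_le_mul (by exact hlam l) hone (norm_nonneg _) (norm_nonneg _)
              _ = ‖T‖ := mul_one _
        _ = 2 * ‖T‖ := by ring
    calc ‖_ * (T - lam l • 1)‖ ≤ _ := norm_mul_le _ _
      _ ≤ δ⁻¹ * (2 * ‖T‖) := mul_le_mul h1 h3 (norm_nonneg _) (by positivity)
      _ = K := by rw [hKdef]; ring
  -- norm of products
  have hprodnorm : ∀ (j : Fin N) (s : Finset (Fin N)), (∀ l ∈ s, l ≠ j) →
      ‖(Polynomial.aeval T) (∏ l ∈ s, q j l)‖ ≤ K ^ s.card := by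
    intro j s
    induction s using Finset.induction_on with
    | empty =>
      intro _
      rw [Finset.prod_empty, map_one, Finset.card_empty, pow_zero]
      exact hone
    | @insert a s ha ih =>
      intro hs
      rw [Finset.prod_insert ha, map_mul, Finset.card_insert_of_notMem ha, pow_succ']
      calc ‖(Polynomial.aeval T) (q j a) * (Polynomial.aeval T) (∏ l ∈ s, q j l)‖
          ≤ ‖(Polynomial.aeval T) (q j a)‖ * ‖(Polynomial.aeval T) (∏ l ∈ s, q j l)‖ := norm_mul_le _ _
        _ ≤ K * K ^ s.card := by
            refine mul_le_mul (hfn j a (hs a (Finset.mem_insert_self a s))) (ih fun l hl => hs l (Finset.mem_insert_of_mem hl)) (norm_nonneg _) hK0'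
  -- action on eigenvectors
  have hfact_apply : ∀ j l k, (Polynomial.aeval T) (q j l) (v k)
      = ((lam j - lam l)⁻¹ * (lam k - lam l)) • v k := by
    intro j l k
    rw [haq]
    rw [ContinuousLinearMap.mul_apply, ContinuousLinearMap.sub_apply,
      ContinuousLinearMap.smul_apply, ContinuousLinearMap.smul_apply,
      ContinuousLinearMap.one_apply, ContinuousLinearMap.one_apply, hv k,
      ← sub_smul, smul_smul]
  have hact : ∀ (j k : Fin N) (s : Finset (Fin N)),
      (Polynomial.aeval T) (∏ l ∈ s, q j l) (v k)
        = (∏ l ∈ s, ((lam j - lam l)⁻¹ * (lam k - lam l))) • v k := by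
    intro j k s
    induction s using Finset.induction_on with
    | empty => simp
    | @insert a s ha ih =>
      rw [Finset.prod_insert ha, Finset.prod_insert ha, map_mul,
        ContinuousLinearMap.mul_apply, ih, map_smul, hfact_apply, smul_smul, mul_comm]
  -- product evaluations
  have hsub_ne : ∀ j l, l ≠ j → lam j - lam l ≠ 0 := by
    intro j l hlj h0
    have h1 := hsep j l hlj.symm
    rw [h0] at h1
    simp only [norm_zero] at h1
    linarith
  have hdiag : ∀ j, (∏ l ∈ Finset.univ.erase j, ((lam j - lam l)⁻¹ * (lam j - lam l))) = 1 := by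
    intro j
    exact Finset.prod_eq_one fun l hl => inv_mul_cancel₀ (hsub_ne j l (Finset.mem_erase.mp hl).1)
  have hoff : ∀ j k, k ≠ j →
      (∏ l ∈ Finset.univ.erase j, ((lam j - lam l)⁻¹ * (lam k - lam l))) = 0 := by
    intro j k hkj
    refine Finset.prod_eq_zero (Finset.mem_erase.mpr ⟨hkj, Finset.mem_univ k⟩) ?_
    rw [sub_self, mul_zero]
  -- main bound
  rw [show opNorm U⁻¹ = ‖Matrix.toEuclideanCLM (𝕜 := ℂ) U⁻¹‖ from rfl]
  refine ContinuousLinearMap.opNorm_le_bound _ hRHS0 fun y => ?_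
  set y' := WithLp.equiv 2 (Fin N → ℂ) y with hy'
  set x := U⁻¹.mulVec y' with hx
  have happ : Matrix.toEuclideanCLM (𝕜 := ℂ) U⁻¹ y = (WithLp.equiv 2 (Fin N → ℂ)).symm x := by
    conv_lhs => rw [← (WithLp.equiv 2 (Fin N → ℂ)).symm_apply_apply y]
    rw [WithLp.equiv_symm_apply, Matrix.toEuclideanCLM_toLp]
  have hUx : U.mulVec x = y' := by
    rw [hx, Matrix.mulVec_mulVec, Matrix.mul_nonsing_inv U hdet, Matrix.one_mulVec]
  have hyx : y = ∑ k, x k • v k := by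
    have h1 : y' = ∑ k, x k • ξ k := by
      rw [← hUx]
      funext i
      rw [hU]
      simp [Matrix.mulVec, dotProduct, Finset.sum_apply, Pi.smul_apply, smul_eq_mul,
        mul_comm]
    have h2 := congrArg (WithLp.linearEquiv 2 ℂ (Fin N → ℂ)).symm h1
    rw [map_sum] at h2
    simp only [map_smul] at h2
    have h3 : (WithLp.linearEquiv 2 ℂ (Fin N → ℂ)).symm y' = y :=
      (WithLp.equiv 2 (Fin N → ℂ)).symm_apply_apply y
    rw [h3] at h2
    exact h2
  have hxj : ∀ j, ‖x j‖ ≤ K ^ (N - 1) * ‖y‖ := by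
    intro j
    have hcard : (Finset.univ.erase j).card = N - 1 := by
      rw [Finset.card_erase_of_mem (Finset.mem_univ j), Finset.card_univ, Fintype.card_fin]
    have h2 : (Polynomial.aeval T) (∏ l ∈ Finset.univ.erase j, q j l) y = x j • v j := by
      rw [hyx, map_sum]
      simp only [map_smul, hact j _ (Finset.univ.erase j)]
      rw [Finset.sum_eq_single j]
      · rw [hdiag j, one_smul]
      · intro k _ hkj
        rw [hoff j k hkj, zero_smul, smul_zero]
      · intro h; exact absurd (Finset.mem_univ j) h
    have h3 := ContinuousLinearMap.le_opNorm
      ((Polynomial.aeval T) (∏ l ∈ Finset.univ.erase j, q j l)) y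
    rw [h2, norm_smul, hvnorm j, mul_one] at h3
    refine h3.trans ?_
    have h4 := hprodnorm j (Finset.univ.erase j) (fun l hl => (Finset.mem_erase.mp hl).1)
    rw [hcard] at h4
    exact mul_le_mul_of_nonneg_right h4 (norm_nonneg y)
  rw [happ, EuclideanSpace.norm_eq]
  have hb0 : 0 ≤ K ^ (N - 1) * ‖y‖ := mul_nonneg (pow_nonneg hK0' _) (norm_nonneg _)
  calc Real.sqrt (∑ i, ‖((WithLp.equiv 2 (Fin N → ℂ)).symm x) i‖ ^ 2)
      ≤ Real.sqrt (N * (K ^ (N - 1) * ‖y‖) ^ 2) := by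
        apply Real.sqrt_le_sqrt
        calc ∑ i, ‖((WithLp.equiv 2 (Fin N → ℂ)).symm x) i‖ ^ 2
            ≤ ∑ _i : Fin N, (K ^ (N - 1) * ‖y‖) ^ 2 := by
              refine Finset.sum_le_sum fun i _ => ?_
              have hc : ((WithLp.equiv 2 (Fin N → ℂ)).symm x) i = x i := rfl
              rw [hc]
              exact pow_le_pow_left₀ (norm_nonneg _) (hxj i) 2
          _ = N * (K ^ (N - 1) * ‖y‖) ^ 2 := by
              rw [Finset.sum_const, Finset.card_univ, Fintype.card_fin, nsmul_eq_mul]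
    _ = Real.sqrt N * (K ^ (N - 1) * ‖y‖) := by
        rw [Real.sqrt_mul (Nat.cast_nonneg N), Real.sqrt_sq hb0]
    _ = Real.sqrt N * (2 * δ⁻¹ * opNorm L) ^ (N - 1) * ‖y‖ := by
        rw [hTnorm]; ring
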